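/- In a partially additive field, there are no zero divisors: for elements a, b, the product a × b is a zero element if and only if a is a zero element or b is a zero element. -/
import Mathlib


/-- A partially additive field: partial addition (modeled via `Option`, `none` = undefined),
total multiplication, per-element zeros, etc. -/
structure PAF (Q : Type*) where
  add : Q → Q → Option Q
  mul : Q → Q → Q
  zero : Q → Q
  one : Q
  neg : Q → Q
  inv : Q → Q
  add_comm : ∀ a b, add a b = add b a
  mul_comm : ∀ a b, mul a b = mul b a
  add_assoc : ∀ a b c, (add a b).bind (fun x => add x c) = (add b c).bind (fun x => add a x)
  mul_assoc : ∀ a b c, mul (mul a b) c = mul a (mul b c)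
  left_distrib : ∀ a b c, (add b c).map (mul a) = add (mul a b) (mul a c)
  add_zero : ∀ a, add a (zero a) = some a
  zero_unique : ∀ a z, add a z = some a → z = zero a
  mul_one : ∀ a, mul a one = a
  add_neg : ∀ a, add a (neg a) = some (zero a)
  mul_inv : ∀ a, (¬ ∃ b, a = zero b) → mul a (inv a) = one
  nontrivial : ∀ a b, a = zero b → ∃ c, (¬ ∃ d, c = zero d) ∧ a = zero c

namespace PAF
variable {Q : Type*} (F : PAF Q)

/-- `a` is a zero element. -/
def IsZero (a : Q) : Prop := ∃ b, a = F.zero b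

/-- `a` and `b` are summable (their sum is defined). -/
def Summable (a b : Q) : Prop := (F.add a b).isSome

/-- `a` is dimensionless iff it is summable with `1`. -/
def Dimensionless (a : Q) : Prop := F.Summable a F.one

/-- `n`-th power via the total multiplication. -/
def pow (a : Q) : ℕ → Q
  | 0 => F.one
  | n + 1 => F.mul a (pow a n)

end PAF

/-- No zero divisors: `a × b` is a zero element iff `a` or `b` is. -/
lemma PAF.isZero_mul_of_isZero {Q : Type*} (F : PAF Q) {c : Q} (x : Q)
    (h : F.IsZero c) : F.IsZero (F.mul x c) := by
  obtain ⟨e, rfl⟩ := h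
  have h1 : F.add e (F.zero e) = some e := F.add_zero e
  have h2 := F.left_distrib x e (F.zero e)
  rw [h1] at h2
  exact ⟨F.mul x e, F.zero_unique _ _ h2.symm⟩

theorem no_zero_divisors {Q : Type*} (F : PAF Q) (a b : Q) :
    F.IsZero (F.mul a b) ↔ F.IsZero a ∨ F.IsZero b := by
  constructor
  · intro h
    by_cases ha : F.IsZero a
    · exact Or.inl ha
    · right
      have hinv := F.mul_inv a ha
      have : b = F.mul (F.inv a) (F.mul a b) := by
        rw [← F.mul_assoc, F.mul_comm (F.inv a) a, hinv, F.mul_comm, F.mul_one]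
      rw [this]
      exact F.isZero_mul_of_isZero _ h
  · rintro (h | h)
    · rw [F.mul_comm]; exact F.isZero_mul_of_isZero _ h
    · exact F.isZero_mul_of_isZero _ h
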